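/- Fix N, K, ρ ∈ [0,1), ξ ∈ (0,1], γ₀ > 0, T > 0 and β_1,…,β_K > 0, and regard the eavesdropper-rate upper bound C̄ as a function of the antenna ratio a ∈ (0,1) via M = a·N, with b = K/N, φ = 1−b, κ = 1−ξ+ρ', ϖ(a) = a·b·(1−ξ)². On the interval of a where the denominator φ·κ²·(N/T − a) − ϖ(a) > 0, the map a ↦ C̄(a) is strictly increasing, and consequently the secrecy-rate lower bound a ↦ R_sec(a) = max(R_k − C̄(a), 0) is nonincreasing in a (R_k does not depend on a). -/

import Mathlib

/-- regarding the eavesdropper-rate upper bound `C̄` as a function of the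
antenna ratio `a ∈ (0,1)` via `M = a·N`, on the interval of `a` where
`φ·κ²·(N/T − a) − ϖ(a) > 0`, the map `a ↦ C̄(a)` is strictly increasing, and the
secrecy-rate lower bound `a ↦ max (R_k − C̄(a)) 0` is nonincreasing in `a`. -/
theorem stmt_7 (K : ℕ) (hK : 0 < K) (β : Fin K → ℝ) (hβ : ∀ i, 0 < β i) (k : Fin K)
    (N T γ₀ ρ ξ : ℝ) (hN : 0 < N) (hKN : (K : ℝ) < N) (hT : 0 < T) (hγ₀ : 0 < γ₀)
    (hρ : ρ ∈ Set.Ico (0 : ℝ) 1) (hξ : ξ ∈ Set.Ioc (0 : ℝ) 1)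
    (S b φ ρ' κ : ℝ) (hS : S = ∑ i, β i) (hb : b = K / N) (hφ : φ = 1 - b)
    (hρ' : ρ' = ρ / (1 - ρ)) (hκ : κ = 1 - ξ + ρ')
    (Rk : ℝ)
    (hRk : Rk = Real.logb 2 (1 +
      ((1 - ρ) * (β k) ^ 2 * γ₀ * ξ * N / S) /
        ((1 - ρ) * ξ * γ₀ * (β k) * T * (∑ j ∈ Finset.univ.erase k, β j) / (N * S)
          + ρ * (β k) * γ₀ + 1)))
    (Cbar : ℝ → ℝ)
    (hCbar : ∀ a : ℝ, Cbar a = Real.logb 2 (1 +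
      (φ * (a * N) * ξ * κ * (β k) / S) /
        (φ * κ ^ 2 * (N / T - a) - a * b * (1 - ξ) ^ 2)))
    (goodSet : Set ℝ)
    (hgood : goodSet = {a : ℝ | a ∈ Set.Ioo (0 : ℝ) 1 ∧
      0 < φ * κ ^ 2 * (N / T - a) - a * b * (1 - ξ) ^ 2}) :
    StrictMonoOn Cbar goodSet ∧
    AntitoneOn (fun a => max (Rk - Cbar a) 0) goodSet := by
  have hS0 : 0 < S := by
    rw [hS]
    exact Finset.sum_pos (fun i _ => hβ i) ⟨k, Finset.mem_univ k⟩
  have hβk : 0 < β k := hβ k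
  have hbpos : 0 < b := by
    rw [hb]; positivity
  have hφpos : 0 < φ := by
    rw [hφ, hb]
    have : (K : ℝ) / N < 1 := (div_lt_one hN).2 hKN
    linarith
  have hρ'0 : 0 ≤ ρ' := by
    rw [hρ']
    exact div_nonneg hρ.1 (by linarith [hρ.2])
  have hκ0 : 0 ≤ κ := by rw [hκ]; linarith [hξ.2]
  have hmono : StrictMonoOn Cbar goodSet := by
    intro a₁ h₁ a₂ h₂ h12
    rw [hgood] at h₁ h₂
    obtain ⟨⟨ha₁0, ha₁1⟩, hd₁⟩ := h₁
    obtain ⟨⟨ha₂0, ha₂1⟩, hd₂⟩ := h₂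
    have hκpos : 0 < κ := by
      rcases lt_or_eq_of_le hκ0 with h | h
      · exact h
      · exfalso
        rw [← h] at hd₁
        nlinarith [mul_nonneg (mul_nonneg ha₁0.le hbpos.le) (sq_nonneg (1 - ξ))]
    rw [hCbar a₁, hCbar a₂]
    have hd21 : φ * κ ^ 2 * (N / T - a₂) - a₂ * b * (1 - ξ) ^ 2
        < φ * κ ^ 2 * (N / T - a₁) - a₁ * b * (1 - ξ) ^ 2 := by
      nlinarith [mul_pos (mul_pos hφpos (pow_pos hκpos 2)) (sub_pos.2 h12),
        mul_nonneg (mul_nonneg (sub_pos.2 h12).le hbpos.le) (sq_nonneg (1 - ξ))]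
    have hnum1 : 0 < φ * (a₁ * N) * ξ * κ * β k / S := by
      have := hξ.1; positivity
    have hnum12 : φ * (a₁ * N) * ξ * κ * β k / S < φ * (a₂ * N) * ξ * κ * β k / S := by
      have hξ0 := hξ.1
      have hc : 0 < φ * N * ξ * κ * β k := by positivity
      apply div_lt_div_of_pos_right _ hS0
      nlinarith [mul_pos hc (sub_pos.2 h12)]
    have hfrac : φ * (a₁ * N) * ξ * κ * β k / S /
        (φ * κ ^ 2 * (N / T - a₁) - a₁ * b * (1 - ξ) ^ 2)
        < φ * (a₂ * N) * ξ * κ * β k / S /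
        (φ * κ ^ 2 * (N / T - a₂) - a₂ * b * (1 - ξ) ^ 2) :=
      div_lt_div₀ hnum12 hd21.le (by have := hξ.1; positivity) hd₂
    have hpos1 : 0 < 1 + φ * (a₁ * N) * ξ * κ * β k / S /
        (φ * κ ^ 2 * (N / T - a₁) - a₁ * b * (1 - ξ) ^ 2) := by
      have := div_pos hnum1 hd₁; linarith
    exact Real.logb_lt_logb one_lt_two hpos1 (by linarith)
  refine ⟨hmono, ?_⟩
  intro a₁ h₁ a₂ h₂ h12
  rcases lt_or_eq_of_le h12 with h | h
  · have := hmono h₁ h₂ h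
    simp only
    exact max_le_max (by linarith) le_rfl
  · rw [h]
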